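/- For all integers 2 ≤ k ≤ n, the function λ ↦ cot(𝒫_{k,n}(λ)) is concave on Γ: for all λ, μ ∈ Γ and s ∈ [0,1], cot(𝒫_{k,n}(s λ + (1−s) μ)) ≥ s · cot(𝒫_{k,n}(λ)) + (1−s) · cot(𝒫_{k,n}(μ)). Moreover, on Γ one has cot(𝒫_{k,n}(λ)) = min over subsets I ⊆ {1,…,n} with |I| = k−1 of cot(Σ_{i∈I} arccot(λᵢ)). -/

import Mathlib

open Real

/-- `arccot x = π/2 - arctan x`, a strictly decreasing bijection from `ℝ` onto `(0, π)`. -/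
noncomputable def arccot (x : ℝ) : ℝ := π / 2 - Real.arctan x

/-- `𝒫_{k,n}(λ)`: the maximum over subsets `I ⊆ {1,…,n}` with `|I| = k-1` of
`∑_{i ∈ I} arccot (λ i)`. -/
noncomputable def Pfun (n k : ℕ) (lam : Fin n → ℝ) : ℝ :=
  sSup {x : ℝ | ∃ s : Finset (Fin n), s.card = k - 1 ∧ x = ∑ i ∈ s, arccot (lam i)}

lemma arccot_pos (x : ℝ) : 0 < arccot x := by
  have := Real.arctan_lt_pi_div_two x
  unfold arccot; linarith

lemma arccot_lt_pi (x : ℝ) : arccot x < π := by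
  have := Real.neg_pi_div_two_lt_arctan x
  have := Real.pi_pos
  unfold arccot; linarith

lemma cot_arccot (x : ℝ) : Real.cot (arccot x) = x := by
  unfold arccot
  rw [Real.cot_eq_cos_div_sin, Real.cos_pi_div_two_sub, Real.sin_pi_div_two_sub,
    ← Real.tan_eq_sin_div_cos, Real.tan_arctan]

lemma cot_eq_tan_pi_div_two_sub (y : ℝ) : Real.cot y = Real.tan (π / 2 - y) := by
  rw [Real.cot_eq_cos_div_sin, Real.tan_eq_sin_div_cos, Real.sin_pi_div_two_sub,
    Real.cos_pi_div_two_sub]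

lemma arccot_cot {y : ℝ} (h1 : 0 < y) (h2 : y < π) : arccot (Real.cot y) = y := by
  unfold arccot
  rw [cot_eq_tan_pi_div_two_sub, Real.arctan_tan (by linarith) (by linarith)]
  ring

lemma arccot_strictAnti : StrictAnti arccot := fun a b h => by
  unfold arccot
  have := Real.arctan_strictMono h
  linarith

lemma cot_lt_cot {x y : ℝ} (hx : 0 < x) (hxy : x < y) (hy : y < π) :
    Real.cot y < Real.cot x := by
  rw [cot_eq_tan_pi_div_two_sub, cot_eq_tan_pi_div_two_sub]
  exact Real.strictMonoOn_tan ⟨by linarith, by linarith⟩ ⟨by linarith, by linarith⟩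
    (by linarith)

lemma cot_le_cot {x y : ℝ} (hx : 0 < x) (hxy : x ≤ y) (hy : y < π) :
    Real.cot y ≤ Real.cot x := by
  rcases eq_or_lt_of_le hxy with rfl | h
  · exact le_refl _
  · exact (cot_lt_cot hx h hy).le

lemma add_arccot_lt_pi_iff {θ x : ℝ} (h1 : 0 < θ) (h2 : θ < π) :
    θ + arccot x < π ↔ 0 < Real.cot θ + x := by
  have hkey : arccot (-Real.cot θ) = π - θ := by
    have hc : Real.cot (π - θ) = -Real.cot θ := by
      rw [Real.cot_eq_cos_div_sin, Real.cot_eq_cos_div_sin, Real.cos_pi_sub,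
        Real.sin_pi_sub, neg_div]
    rw [← hc, arccot_cot (by linarith) (by linarith)]
  constructor
  · intro h
    have : arccot x < arccot (-Real.cot θ) := by rw [hkey]; linarith
    have := arccot_strictAnti.lt_iff_gt.mp this
    linarith
  · intro h
    have : arccot x < arccot (-Real.cot θ) := arccot_strictAnti (by linarith)
    rw [hkey] at this; linarith

lemma cot_add_pos {A B : ℝ} (hA : 0 < A) (hB : 0 < B) (hApi : A < π) (hBpi : B < π)
    (hAB : A + B < π) :
    Real.cot (A + B) = (Real.cot A * Real.cot B - 1) / (Real.cot A + Real.cot B) := by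
  have hsA : 0 < Real.sin A := Real.sin_pos_of_pos_of_lt_pi hA hApi
  have hsB : 0 < Real.sin B := Real.sin_pos_of_pos_of_lt_pi hB hBpi
  have hsAB : 0 < Real.sin (A + B) := Real.sin_pos_of_pos_of_lt_pi (by linarith) hAB
  have hden : Real.cot A + Real.cot B = Real.sin (A + B) / (Real.sin A * Real.sin B) := by
    rw [Real.cot_eq_cos_div_sin, Real.cot_eq_cos_div_sin, Real.sin_add]
    field_simp; ring
  have hden' : Real.cot A + Real.cot B ≠ 0 := by
    rw [hden]; positivity
  rw [Real.cot_eq_cos_div_sin (A + B), Real.cot_eq_cos_div_sin A, Real.cot_eq_cos_div_sin B,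
    Real.sin_add, Real.cos_add]
  rw [Real.cot_eq_cos_div_sin, Real.cot_eq_cos_div_sin] at hden'
  field_simp
  field_simp [Real.sin_add] at hden'
  ring

lemma Hmono {a a' b : ℝ} (h : a ≤ a') (h1 : 0 < a + b) :
    (a * b - 1) / (a + b) ≤ (a' * b - 1) / (a' + b) := by
  have h2 : 0 < a' + b := by linarith
  rw [div_le_div_iff₀ h1 h2]
  nlinarith [mul_nonneg (sub_nonneg.2 h) (by positivity : (0:ℝ) ≤ b ^ 2 + 1)]

lemma Hconcave {a1 b1 a2 b2 s : ℝ} (h1 : 0 < a1 + b1) (h2 : 0 < a2 + b2)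
    (hs0 : 0 ≤ s) (hs1 : s ≤ 1) :
    s * ((a1 * b1 - 1) / (a1 + b1)) + (1 - s) * ((a2 * b2 - 1) / (a2 + b2)) ≤
      ((s * a1 + (1 - s) * a2) * (s * b1 + (1 - s) * b2) - 1) /
        ((s * a1 + (1 - s) * a2) + (s * b1 + (1 - s) * b2)) := by
  have ht0 : 0 ≤ 1 - s := by linarith
  have hD : 0 < (s * a1 + (1 - s) * a2) + (s * b1 + (1 - s) * b2) := by
    rcases eq_or_lt_of_le hs0 with rfl | hs0'
    · nlinarith
    · nlinarith [mul_pos hs0' h1, mul_nonneg ht0 h2.le]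
  rw [mul_div_assoc'] at *
  rw [mul_div_assoc', div_add_div _ _ h1.ne' h2.ne', div_le_div_iff₀ (by positivity) hD]
  nlinarith [mul_nonneg (mul_nonneg hs0 ht0)
      (sq_nonneg ((a1 - b1) * (a2 + b2) - (a2 - b2) * (a1 + b1))),
    mul_nonneg (mul_nonneg hs0 ht0) (sq_nonneg ((a1 + b1) - (a2 + b2)))]

/-- Key induction: concavity of `cot ∘ (sum of arccot)` over a nonempty finset. -/
lemma key_lemma {ι : Type*} {I : Finset ι} (hI : I.Nonempty) (f g : ι → ℝ) {s : ℝ}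
    (hs0 : 0 ≤ s) (hs1 : s ≤ 1)
    (hf : ∑ i ∈ I, arccot (f i) < π) (hg : ∑ i ∈ I, arccot (g i) < π) :
    (∑ i ∈ I, arccot (s * f i + (1 - s) * g i) < π) ∧
    s * Real.cot (∑ i ∈ I, arccot (f i)) + (1 - s) * Real.cot (∑ i ∈ I, arccot (g i)) ≤
      Real.cot (∑ i ∈ I, arccot (s * f i + (1 - s) * g i)) := by
  induction hI using Finset.Nonempty.cons_induction with
  | singleton a =>
    simp only [Finset.sum_singleton, cot_arccot]
    exact ⟨arccot_lt_pi _, le_refl _⟩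
  | cons a I ha hne ih =>
    simp only [Finset.sum_cons] at hf hg ⊢
    have hposf : 0 < ∑ i ∈ I, arccot (f i) :=
      Finset.sum_pos (fun i _ => arccot_pos _) hne
    have hposg : 0 < ∑ i ∈ I, arccot (g i) :=
      Finset.sum_pos (fun i _ => arccot_pos _) hne
    have haf := arccot_pos (f a)
    have hag := arccot_pos (g a)
    have hf' : ∑ i ∈ I, arccot (f i) < π := by linarith
    have hg' : ∑ i ∈ I, arccot (g i) < π := by linarith
    obtain ⟨hh', ihle⟩ := ih hf' hg'
    have hposh : 0 < ∑ i ∈ I, arccot (s * f i + (1 - s) * g i) :=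
      Finset.sum_pos (fun i _ => arccot_pos _) hne
    set F := ∑ i ∈ I, arccot (f i)
    set G := ∑ i ∈ I, arccot (g i)
    set H := ∑ i ∈ I, arccot (s * f i + (1 - s) * g i)
    -- positivity of cot F + f a, cot G + g a
    have hcf : 0 < Real.cot F + f a := by
      have := (add_arccot_lt_pi_iff (x := f a) hposf hf').mp (by linarith)
      exact this
    have hcg : 0 < Real.cot G + g a := by
      have := (add_arccot_lt_pi_iff (x := g a) hposg hg').mp (by linarith)
      exact this
    have hcomb : 0 < s * (Real.cot F + f a) + (1 - s) * (Real.cot G + g a) := by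
      rcases eq_or_lt_of_le hs0 with rfl | hs0'
      · simpa using hcg
      · have h1 : 0 < s * (Real.cot F + f a) := mul_pos hs0' hcf
        have h2 : 0 ≤ (1 - s) * (Real.cot G + g a) :=
          mul_nonneg (by linarith) hcg.le
        linarith
    have hch : 0 < Real.cot H + (s * f a + (1 - s) * g a) := by
      have : s * Real.cot F + (1 - s) * Real.cot G ≤ Real.cot H := ihle
      nlinarith
    have hHlt : arccot (s * f a + (1 - s) * g a) + H < π := by
      have := (add_arccot_lt_pi_iff (x := s * f a + (1 - s) * g a) hposh hh').mpr hch
      linarith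
    refine ⟨hHlt, ?_⟩
    -- rewrite cot of sums using the addition formula
    have hrwf : Real.cot (arccot (f a) + F) =
        (Real.cot F * f a - 1) / (Real.cot F + f a) := by
      rw [add_comm, cot_add_pos hposf haf hf' (arccot_lt_pi _) (by linarith), cot_arccot]
    have hrwg : Real.cot (arccot (g a) + G) =
        (Real.cot G * g a - 1) / (Real.cot G + g a) := by
      rw [add_comm, cot_add_pos hposg hag hg' (arccot_lt_pi _) (by linarith), cot_arccot]
    have hrwh : Real.cot (arccot (s * f a + (1 - s) * g a) + H) =
        (Real.cot H * (s * f a + (1 - s) * g a) - 1) /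
          (Real.cot H + (s * f a + (1 - s) * g a)) := by
      rw [add_comm, cot_add_pos hposh (arccot_pos _) hh' (arccot_lt_pi _) (by linarith),
        cot_arccot]
    rw [hrwf, hrwg, hrwh]
    calc s * ((Real.cot F * f a - 1) / (Real.cot F + f a)) +
          (1 - s) * ((Real.cot G * g a - 1) / (Real.cot G + g a)) ≤
        ((s * Real.cot F + (1 - s) * Real.cot G) * (s * f a + (1 - s) * g a) - 1) /
          ((s * Real.cot F + (1 - s) * Real.cot G) + (s * f a + (1 - s) * g a)) :=
        Hconcave hcf hcg hs0 hs1
      _ ≤ (Real.cot H * (s * f a + (1 - s) * g a) - 1) /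
          (Real.cot H + (s * f a + (1 - s) * g a)) := by
        apply Hmono ihle
        nlinarith

/-- The defining set of `Pfun` is finite. -/
lemma Pfun_set_finite (n k : ℕ) (lam : Fin n → ℝ) :
    {x : ℝ | ∃ s : Finset (Fin n), s.card = k - 1 ∧ x = ∑ i ∈ s, arccot (lam i)}.Finite := by
  apply Set.Finite.subset (Set.finite_range (fun t : Finset (Fin n) => ∑ i ∈ t, arccot (lam i)))
  rintro x ⟨t, _, rfl⟩
  exact ⟨t, rfl⟩

lemma Pfun_set_nonempty (n k : ℕ) (hkn : k ≤ n) (lam : Fin n → ℝ) :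
    {x : ℝ | ∃ s : Finset (Fin n), s.card = k - 1 ∧ x = ∑ i ∈ s, arccot (lam i)}.Nonempty := by
  obtain ⟨t, -, ht⟩ := Finset.exists_subset_card_eq (s := (Finset.univ : Finset (Fin n))) (n := k - 1)
    (by simp; omega)
  exact ⟨∑ i ∈ t, arccot (lam i), t, ht, rfl⟩

lemma sum_arccot_pos {n k : ℕ} (hk : 2 ≤ k) {t : Finset (Fin n)} (ht : t.card = k - 1)
    (lam : Fin n → ℝ) : 0 < ∑ i ∈ t, arccot (lam i) := by
  apply Finset.sum_pos (fun i _ => arccot_pos _)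
  rw [← Finset.card_pos, ht]; omega

lemma sum_arccot_lt_pi {n : ℕ} (t : Finset (Fin n)) (lam : Fin n → ℝ)
    (hlam : (∑ i, arccot (lam i)) < π) : ∑ i ∈ t, arccot (lam i) < π := by
  calc ∑ i ∈ t, arccot (lam i) ≤ ∑ i, arccot (lam i) :=
        Finset.sum_le_sum_of_subset_of_nonneg (Finset.subset_univ t)
          (fun i _ _ => (arccot_pos _).le)
    _ < π := hlam

lemma Pfun_mem (n k : ℕ) (hkn : k ≤ n) (lam : Fin n → ℝ) :
    ∃ t : Finset (Fin n), t.card = k - 1 ∧ Pfun n k lam = ∑ i ∈ t, arccot (lam i) := by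
  exact (Pfun_set_nonempty n k hkn lam).csSup_mem (Pfun_set_finite n k lam)

lemma le_Pfun (n k : ℕ) (lam : Fin n → ℝ) {t : Finset (Fin n)} (ht : t.card = k - 1) :
    ∑ i ∈ t, arccot (lam i) ≤ Pfun n k lam :=
  le_csSup (Pfun_set_finite n k lam).bddAbove ⟨t, ht, rfl⟩

theorem cot_Pfun_concave_and_min (n k : ℕ) (hk : 2 ≤ k) (hkn : k ≤ n)
    (lam mu : Fin n → ℝ)
    (hlam : (∑ i, arccot (lam i)) < π) (hmu : (∑ i, arccot (mu i)) < π)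
    (s : ℝ) (hs0 : 0 ≤ s) (hs1 : s ≤ 1) :
    s * Real.cot (Pfun n k lam) + (1 - s) * Real.cot (Pfun n k mu) ≤
      Real.cot (Pfun n k (s • lam + (1 - s) • mu)) ∧
    Real.cot (Pfun n k lam) =
      sInf {x : ℝ | ∃ t : Finset (Fin n), t.card = k - 1 ∧
        x = Real.cot (∑ i ∈ t, arccot (lam i))} := by
  have hnu : (s • lam + (1 - s) • mu) = fun i => s * lam i + (1 - s) * mu i := by
    funext i; simp [mul_comm]
  obtain ⟨t₀, ht₀, hP₀⟩ := Pfun_mem n k hkn (s • lam + (1 - s) • mu)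
  obtain ⟨tl, htl, hPl⟩ := Pfun_mem n k hkn lam
  obtain ⟨tm, htm, hPm⟩ := Pfun_mem n k hkn mu
  have ht₀ne : t₀.Nonempty := by rw [← Finset.card_pos, ht₀]; omega
  constructor
  · -- concavity
    have hkey := (key_lemma ht₀ne lam mu hs0 hs1
      (sum_arccot_lt_pi t₀ lam hlam) (sum_arccot_lt_pi t₀ mu hmu)).2
    have hPνeq : Pfun n k (s • lam + (1 - s) • mu) =
        ∑ i ∈ t₀, arccot (s * lam i + (1 - s) * mu i) := by
      rw [hP₀, hnu]
    rw [hPνeq]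
    have hl : Real.cot (Pfun n k lam) ≤ Real.cot (∑ i ∈ t₀, arccot (lam i)) := by
      rw [hPl]
      exact cot_le_cot (sum_arccot_pos hk ht₀ lam) (hPl ▸ le_Pfun n k lam ht₀)
        (sum_arccot_lt_pi tl lam hlam)
    have hm : Real.cot (Pfun n k mu) ≤ Real.cot (∑ i ∈ t₀, arccot (mu i)) := by
      rw [hPm]
      exact cot_le_cot (sum_arccot_pos hk ht₀ mu) (hPm ▸ le_Pfun n k mu ht₀)
        (sum_arccot_lt_pi tm mu hmu)
    calc s * Real.cot (Pfun n k lam) + (1 - s) * Real.cot (Pfun n k mu) ≤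
        s * Real.cot (∑ i ∈ t₀, arccot (lam i)) +
          (1 - s) * Real.cot (∑ i ∈ t₀, arccot (mu i)) := by
          have := mul_le_mul_of_nonneg_left hl hs0
          have := mul_le_mul_of_nonneg_left hm (by linarith : (0:ℝ) ≤ 1 - s)
          linarith
      _ ≤ _ := hkey
  · -- min formula
    set T := {x : ℝ | ∃ t : Finset (Fin n), t.card = k - 1 ∧
        x = Real.cot (∑ i ∈ t, arccot (lam i))}
    have hTfin : T.Finite := by
      apply Set.Finite.subset (Set.finite_range
        (fun t : Finset (Fin n) => Real.cot (∑ i ∈ t, arccot (lam i))))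
      rintro x ⟨t, _, rfl⟩
      exact ⟨t, rfl⟩
    have hmemT : Real.cot (Pfun n k lam) ∈ T := ⟨tl, htl, by rw [hPl]⟩
    have hlb : ∀ x ∈ T, Real.cot (Pfun n k lam) ≤ x := by
      rintro x ⟨t, ht, rfl⟩
      exact cot_le_cot (sum_arccot_pos hk ht lam) (le_Pfun n k lam ht)
        (hPl ▸ sum_arccot_lt_pi tl lam hlam)
    exact le_antisymm (le_csInf ⟨_, hmemT⟩ hlb) (csInf_le hTfin.bddBelow hmemT)
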